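/- Let γ ∈ 𝕋 not be a root of unity, let θ = Log(γ)/i, and let t = 1/2 + Log(γ)/(2πi). Then t is irrational, and there are infinitely many n ∈ ℕ with 0 < Log(γ^n) < 2π/n; equivalently, the fractional part of nt is less than 1/n for infinitely many n. -/

import Mathlib

open Real

private lemma fract_add_eq (x y : ℝ) :
    Int.fract (x + y) = Int.fract (Int.fract x + Int.fract y) := by
  have h : x + y = Int.fract x + Int.fract y + ((⌊x⌋ + ⌊y⌋ : ℤ) : ℝ) := by
    simp only [Int.fract]; push_cast; ring
  rw [h, Int.fract_add_intCast]

private lemma fract_nmul_pos {α : ℝ} (hα : Irrational α) {n : ℕ} (hn : 0 < n) :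
    0 < Int.fract ((n : ℝ) * α) := by
  refine Int.fract_pos.mpr fun hc => ?_
  exact (hα.natCast_mul hn.ne').ne_int ⌊(n : ℝ) * α⌋ hc

/-- The invariant: `a ε_b + b δ_a = 1` where `δ_a = fract (a α)`, `ε_b = 1 - fract (b α)`. -/
private def PP (α : ℝ) (a b : ℕ) : Prop :=
  0 < a ∧ 0 < b ∧
    (a : ℝ) * (1 - Int.fract ((b : ℝ) * α)) + (b : ℝ) * Int.fract ((a : ℝ) * α) = 1

private lemma fract_sum_ne_one {α : ℝ} (hα : Irrational α) {a b : ℕ} (ha : 0 < a)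
    (hb : 0 < b) : Int.fract ((a : ℝ) * α) + Int.fract ((b : ℝ) * α) ≠ 1 := by
  intro hc
  have h1 : Int.fract (((a + b : ℕ) : ℝ) * α) = 0 := by
    push_cast
    rw [add_mul, fract_add_eq, hc]
    simp
  have h2 := fract_nmul_pos hα (Nat.add_pos_left ha b)
  rw [h1] at h2; exact lt_irrefl _ h2

private lemma stepA {α : ℝ} {a b : ℕ} (h : PP α a b)
    (hlt : 1 - Int.fract ((b : ℝ) * α) < Int.fract ((a : ℝ) * α)) :
    PP α (a + b) b ∧
      Int.fract (((a + b : ℕ) : ℝ) * α)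
        = Int.fract ((a : ℝ) * α) - (1 - Int.fract ((b : ℝ) * α)) := by
  obtain ⟨ha, hb, heq⟩ := h
  set fa := Int.fract ((a : ℝ) * α) with hfa
  set fb := Int.fract ((b : ℝ) * α) with hfb
  have hfa1 : fa < 1 := Int.fract_lt_one _
  have hfb0 : 0 ≤ fb := Int.fract_nonneg _
  have hkey : Int.fract (((a + b : ℕ) : ℝ) * α) = fa + fb - 1 := by
    push_cast
    rw [add_mul, fract_add_eq, ← hfa, ← hfb]
    have : fa + fb = (fa + fb - 1) + 1 := by ring
    rw [this, Int.fract_add_one, Int.fract_eq_self.mpr ⟨by linarith, by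
      have h9 := Int.fract_lt_one ((b : ℝ) * α); rw [← hfb] at h9; linarith⟩]
    ring
  refine ⟨⟨Nat.add_pos_left ha b, hb, ?_⟩, by rw [hkey]; ring⟩
  rw [hkey]
  push_cast
  linear_combination heq

private lemma stepB {α : ℝ} {a b : ℕ} (h : PP α a b)
    (hlt : Int.fract ((a : ℝ) * α) < 1 - Int.fract ((b : ℝ) * α)) :
    PP α a (a + b) ∧
      1 - Int.fract (((a + b : ℕ) : ℝ) * α)
        = (1 - Int.fract ((b : ℝ) * α)) - Int.fract ((a : ℝ) * α) := by
  obtain ⟨ha, hb, heq⟩ := h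
  set fa := Int.fract ((a : ℝ) * α) with hfa
  set fb := Int.fract ((b : ℝ) * α) with hfb
  have hfa0 : 0 ≤ fa := Int.fract_nonneg _
  have hfb0 : 0 ≤ fb := Int.fract_nonneg _
  have hkey : Int.fract (((a + b : ℕ) : ℝ) * α) = fa + fb := by
    push_cast
    rw [add_mul, fract_add_eq, ← hfa, ← hfb]
    exact Int.fract_eq_self.mpr ⟨by linarith, by linarith⟩
  refine ⟨⟨ha, Nat.add_pos_left ha b, ?_⟩, by rw [hkey]; ring⟩
  rw [hkey]
  push_cast
  linear_combination heq

private lemma reachA {α : ℝ} (hα : Irrational α) :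
    ∀ (k a b : ℕ), PP α a b →
      Int.fract ((a : ℝ) * α) ≤ (k : ℝ) * (1 - Int.fract ((b : ℝ) * α)) →
      ∃ a' b', PP α a' b' ∧ a ≤ a' ∧ a' ≤ b' := by
  intro k
  induction k with
  | zero =>
    intro a b hP hle
    simp only [Nat.cast_zero, zero_mul] at hle
    exact absurd hle (fract_nmul_pos hα hP.1).not_ge
  | succ k ih =>
    intro a b hP hle
    have hne : Int.fract ((a : ℝ) * α) ≠ 1 - Int.fract ((b : ℝ) * α) := by
      intro hc
      exact fract_sum_ne_one hα hP.1 hP.2.1 (by linarith)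
    rcases hne.lt_or_gt with hlt | hgt
    · obtain ⟨hP', _⟩ := stepB hP hlt
      exact ⟨a, a + b, hP', le_refl a, Nat.le_add_right a b⟩
    · obtain ⟨hP', hfr⟩ := stepA hP hgt
      have hle' : Int.fract (((a + b : ℕ) : ℝ) * α)
          ≤ (k : ℝ) * (1 - Int.fract ((b : ℝ) * α)) := by
        rw [hfr]; push_cast at hle ⊢; linarith
      obtain ⟨a', b', hP'', hge, hab⟩ := ih (a + b) b hP' hle'
      exact ⟨a', b', hP'', le_trans (Nat.le_add_right a b) hge, hab⟩

private lemma reachB {α : ℝ} (hα : Irrational α) :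
    ∀ (k a b : ℕ), PP α a b →
      1 - Int.fract ((b : ℝ) * α) ≤ (k : ℝ) * Int.fract ((a : ℝ) * α) →
      ∃ a' b', PP α a' b' ∧ a + 1 ≤ a' := by
  intro k
  induction k with
  | zero =>
    intro a b hP hle
    have hε : 0 < 1 - Int.fract ((b : ℝ) * α) := by
      have := Int.fract_lt_one ((b : ℝ) * α); linarith
    simp only [Nat.cast_zero, zero_mul] at hle
    linarith
  | succ k ih =>
    intro a b hP hle
    have hne : Int.fract ((a : ℝ) * α) ≠ 1 - Int.fract ((b : ℝ) * α) := by
      intro hc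
      exact fract_sum_ne_one hα hP.1 hP.2.1 (by linarith)
    rcases hne.lt_or_gt with hlt | hgt
    · obtain ⟨hP', hfr⟩ := stepB hP hlt
      have hle' : 1 - Int.fract (((a + b : ℕ) : ℝ) * α)
          ≤ (k : ℝ) * Int.fract ((a : ℝ) * α) := by
        rw [hfr]; push_cast at hle ⊢; linarith
      exact ih a (a + b) hP' hle'
    · obtain ⟨hP', _⟩ := stepA hP hgt
      exact ⟨a + b, b, hP', by have hb := hP.2.1; omega⟩

private lemma reachB' {α : ℝ} (hα : Irrational α) (a b : ℕ) (hP : PP α a b) :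
    ∃ a' b', PP α a' b' ∧ a + 1 ≤ a' := by
  have hδ : 0 < Int.fract ((a : ℝ) * α) := fract_nmul_pos hα hP.1
  obtain ⟨k, hk⟩ := exists_nat_ge ((1 - Int.fract ((b : ℝ) * α)) / Int.fract ((a : ℝ) * α))
  exact reachB hα k a b hP (by rw [div_le_iff₀ hδ] at hk; linarith)

private lemma reachA' {α : ℝ} (hα : Irrational α) (a b : ℕ) (hP : PP α a b) :
    ∃ a' b', PP α a' b' ∧ a ≤ a' ∧ a' ≤ b' := by
  have hε : 0 < 1 - Int.fract ((b : ℝ) * α) := by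
    have := Int.fract_lt_one ((b : ℝ) * α); linarith
  obtain ⟨k, hk⟩ := exists_nat_ge (Int.fract ((a : ℝ) * α) / (1 - Int.fract ((b : ℝ) * α)))
  exact reachA hα k a b hP (by rw [div_le_iff₀ hε] at hk; linarith)

private lemma reachC {α : ℝ} (hα : Irrational α) :
    ∀ (k a b : ℕ), PP α a b → ∃ a' b', PP α a' b' ∧ a + k ≤ a' ∧ a' ≤ b' := by
  intro k
  induction k with
  | zero =>
    intro a b hP
    obtain ⟨a', b', hP', hge, hab⟩ := reachA' hα a b hP
    exact ⟨a', b', hP', by omega, hab⟩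
  | succ k ih =>
    intro a b hP
    obtain ⟨a₁, b₁, hP₁, hge₁⟩ := reachB' hα a b hP
    obtain ⟨a', b', hP', hge, hab⟩ := ih a₁ b₁ hP₁
    exact ⟨a', b', hP', by omega, hab⟩

/-- Key lemma: for irrational `α` there are arbitrarily large `n` with
`0 < fract (n α) < 1 / n`. -/
private lemma key {α : ℝ} (hα : Irrational α) (N : ℕ) :
    ∃ n : ℕ, N < n ∧ 0 < Int.fract ((n : ℝ) * α) ∧ Int.fract ((n : ℝ) * α) < 1 / n := by
  have hP : PP α 1 1 := ⟨one_pos, one_pos, by push_cast; ring⟩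
  obtain ⟨a, b, hP', hge, hab⟩ := reachC hα N 1 1 hP
  obtain ⟨ha, hb, heq⟩ := hP'
  have hδ : 0 < Int.fract ((a : ℝ) * α) := fract_nmul_pos hα ha
  refine ⟨a, by omega, hδ, ?_⟩
  have hε : 0 < 1 - Int.fract ((b : ℝ) * α) := by
    have := Int.fract_lt_one ((b : ℝ) * α); linarith
  have hapos : (0 : ℝ) < a := by exact_mod_cast ha
  have hab' : (a : ℝ) ≤ b := Nat.cast_le.mpr hab
  rw [lt_div_iff₀ hapos]
  nlinarith [mul_nonneg (sub_nonneg.mpr hab') hδ.le, mul_pos hapos hε]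

private lemma circle_exp_nat_mul (n : ℕ) (x : ℝ) :
    Circle.exp ((n : ℝ) * x) = Circle.exp x ^ n := by
  induction n with
  | zero => simp
  | succ n ih => push_cast; rw [add_mul, one_mul, Circle.exp_add, ih, pow_succ]

/-- For `γ ∈ 𝕋` not a root of unity, `t = 1/2 + Log(γ)/(2πi)` is irrational, there are
infinitely many `n` with `0 < Log(γ^n) < 2π/n`, and equivalently the fractional part of
`n·t` is less than `1/n` for infinitely many `n`. -/
theorem log_small_infinitely_often (γ : Circle) (h : ∀ n : ℕ, 0 < n → γ ^ n ≠ 1) :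
    Irrational (1 / 2 + (Complex.log (γ : ℂ)).im / (2 * Real.pi)) ∧
    {n : ℕ | 0 < n ∧ 0 < (Complex.log ((γ : ℂ) ^ n)).im ∧
      (Complex.log ((γ : ℂ) ^ n)).im < 2 * Real.pi / n}.Infinite ∧
    {n : ℕ | 0 < n ∧
      Int.fract ((n : ℝ) * (1 / 2 + (Complex.log (γ : ℂ)).im / (2 * Real.pi))) <
        1 / n}.Infinite := by
  have hπ : (0 : ℝ) < π := Real.pi_pos
  have hlogim : (Complex.log (γ : ℂ)).im = Complex.arg (γ : ℂ) := Complex.log_im _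
  -- irrationality of s = arg γ / (2π)
  have hs : Irrational (Complex.arg (γ : ℂ) / (2 * π)) := by
    rintro ⟨q, hq⟩
    have harg : Complex.arg (γ : ℂ) = 2 * π * q := by
      field_simp at hq; linarith
    have hqden : ((q.den : ℝ)) * (2 * π * q) = (q.num : ℝ) * (2 * π) := by
      have h1 : (q : ℝ) = (q.num : ℝ) / (q.den : ℝ) := by rw [Rat.cast_def]
      have hden : ((q.den : ℝ)) ≠ 0 := by exact_mod_cast q.den_nz
      field_simp [h1]
      rw [h1]; field_simp
    have hpow : γ ^ q.den = 1 := by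
      rw [← Circle.exp_arg γ, ← circle_exp_nat_mul, harg, hqden,
        Circle.exp_int_mul_two_pi q.num]
    exact h q.den q.pos hpow
  have ht : Irrational (1 / 2 + (Complex.log (γ : ℂ)).im / (2 * π)) := by
    rw [hlogim]
    have := hs.ratCast_add (q := 1 / 2)
    simpa using this
  refine ⟨ht, ?_, ?_⟩
  · -- the log set
    apply Set.infinite_of_not_bddAbove
    rintro ⟨m, hm⟩
    obtain ⟨n, hn, hpos, hlt⟩ := key hs (max m 1)
    have hn2 : 2 ≤ n := by omega
    set s := Complex.arg (γ : ℂ) / (2 * π) with hsdef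
    set f := Int.fract ((n : ℝ) * s) with hfdef
    have hfn : f < 1 / n := hlt
    have hn0 : (0 : ℝ) < n := by exact_mod_cast (by omega : 0 < n)
    have hn2' : (2 : ℝ) ≤ n := by exact_mod_cast hn2
    have hfhalf : f < 1 / 2 := lt_of_lt_of_le hfn (one_div_le_one_div_of_le two_pos hn2')
    have hγn : ((γ : ℂ) ^ n) = ((γ ^ n : Circle) : ℂ) := by norm_cast
    have hpowexp : γ ^ n = Circle.exp (2 * π * f) := by
      have h1 : γ ^ n = Circle.exp ((n : ℝ) * Complex.arg (γ : ℂ)) := by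
        rw [circle_exp_nat_mul, Circle.exp_arg]
      have h2 : (n : ℝ) * Complex.arg (γ : ℂ)
          = 2 * π * f + (⌊(n : ℝ) * s⌋ : ℤ) * (2 * π) := by
        have h3 : (n : ℝ) * Complex.arg (γ : ℂ) = 2 * π * ((n : ℝ) * s) := by
          rw [hsdef]
          field_simp
        rw [h3, hfdef, Int.fract]
        ring
      rw [h1, h2, Circle.exp_add, Circle.exp_int_mul_two_pi, mul_one]
    have hargn : Complex.arg ((γ : ℂ) ^ n) = 2 * π * f := by
      rw [hγn, hpowexp]
      exact Circle.arg_exp (by nlinarith) (by nlinarith)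
    have hmem : n ∈ {n : ℕ | 0 < n ∧ 0 < (Complex.log ((γ : ℂ) ^ n)).im ∧
        (Complex.log ((γ : ℂ) ^ n)).im < 2 * Real.pi / n} := by
      refine ⟨by omega, ?_, ?_⟩
      · rw [Complex.log_im, hargn]; positivity
      · rw [Complex.log_im, hargn]
        rw [div_eq_mul_one_div (2 * π) (n : ℝ)]
        exact mul_lt_mul_of_pos_left hfn (by positivity)
    have := hm hmem
    omega
  · -- the fract set
    apply Set.infinite_of_not_bddAbove
    rintro ⟨m, hm⟩
    obtain ⟨n, hn, _, hlt⟩ := key ht m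
    have := hm (Set.mem_setOf.mpr ⟨by omega, hlt⟩)
    omega
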